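/- (Identity (1°) in the proof of Theorem A.) Given a Frobenius structure in flat coordinates on U ⊆ ℂ^m and a submanifold datum ι : W → U with T_pN ∘_p T_pN ⊆ T_pN for every p ∈ N, the second fundamental form satisfies the Codazzi-type relation U ∘ h(V,W) − V ∘ h(U,W) = h(V, U∘W) − h(U, V∘W) for all tangent fields U, V, W (here U∘W denotes the tangent field p ↦ U(p) ∘_p W(p), tangent by the закрытость hypothesis, and U ∘ h(V,W) is the ambient product of a tangent and a normal field). -/

import Mathlib

open scoped BigOperators

noncomputable section

/-- A Frobenius structure in flat coordinates on a connected open set `U ⊆ ℂ^m`: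
a nondegenerate symmetric bilinear form, a holomorphic family of commutative
associative invariant products with constant unit `e`, potentiality, and a
holomorphic Euler field `E` with constant `Dconst`. The ambient Levi-Civita
connection is the directional derivative. -/
structure FrobeniusStructure (m : ℕ) where
  U : Set (Fin m → ℂ)
  U_open : IsOpen U
  U_conn : IsConnected U
  g : (Fin m → ℂ) →ₗ[ℂ] (Fin m → ℂ) →ₗ[ℂ] ℂ
  g_symm : ∀ x y, g x y = g y x
  g_nondeg : ∀ x, (∀ y, g x y = 0) → x = 0
  mul : (Fin m → ℂ) → (Fin m → ℂ) →ₗ[ℂ] (Fin m → ℂ) →ₗ[ℂ] (Fin m → ℂ)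
  mul_holo : ∀ x y, DifferentiableOn ℂ (fun p => mul p x y) U
  mul_comm : ∀ p x y, mul p x y = mul p y x
  mul_assoc : ∀ p x y z, mul p (mul p x y) z = mul p x (mul p y z)
  g_invariant : ∀ p x y z, g (mul p x y) z = g x (mul p y z)
  e : Fin m → ℂ
  e_unit : ∀ p x, mul p e x = x
  potential : ∀ p ∈ U, ∀ w x y z : Fin m → ℂ,
    fderiv ℂ (fun q => g (mul q x y) z) p w = fderiv ℂ (fun q => g (mul q w y) z) p x
  E : (Fin m → ℂ) → (Fin m → ℂ)
  E_holo : DifferentiableOn ℂ E U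
  Dconst : ℂ
  euler_metric : ∀ p ∈ U, ∀ x y : Fin m → ℂ,
    g (fderiv ℂ E p x) y + g x (fderiv ℂ E p y) = Dconst * g x y
  euler_prod : ∀ p ∈ U, ∀ x y : Fin m → ℂ,
    fderiv ℂ (fun q => mul q x y) p (E p) - fderiv ℂ E p (mul p x y)
      + mul p (fderiv ℂ E p x) y + mul p x (fderiv ℂ E p y) = mul p x y

/-- A submanifold datum: a holomorphic embedding `emb : W → U` of a connected
open set `W ⊆ ℂ^n`, with everywhere injective differential, such that the
metric restricted to the tangent spaces `T_pN = range (D emb)_w` is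
nondegenerate; `pr w` is the `g`-orthogonal projection onto the tangent space. -/
structure SubmanifoldDatum (m n : ℕ) (F : FrobeniusStructure m) where
  W : Set (Fin n → ℂ)
  W_open : IsOpen W
  W_conn : IsConnected W
  emb : (Fin n → ℂ) → (Fin m → ℂ)
  emb_holo : DifferentiableOn ℂ emb W
  emb_maps : ∀ w ∈ W, emb w ∈ F.U
  emb_inj : Set.InjOn emb W
  demb_inj : ∀ w ∈ W, Function.Injective (fderiv ℂ emb w)
  pr : (Fin n → ℂ) → (Fin m → ℂ) →ₗ[ℂ] (Fin m → ℂ)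
  pr_mem : ∀ w ∈ W, ∀ x, pr w x ∈ Set.range (fderiv ℂ emb w)
  pr_fix : ∀ w ∈ W, ∀ x ∈ Set.range (fderiv ℂ emb w), pr w x = x
  pr_orth : ∀ w ∈ W, ∀ x : Fin m → ℂ, ∀ y ∈ Set.range (fderiv ℂ emb w),
    F.g (x - pr w x) y = 0
  g_nondeg_tangent : ∀ w ∈ W, ∀ x ∈ Set.range (fderiv ℂ emb w),
    (∀ y ∈ Set.range (fderiv ℂ emb w), F.g x y = 0) → x = 0

namespace SubmanifoldDatum

variable {m n : ℕ} {F : FrobeniusStructure m}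

/-- The tangent space `T_pN` at `p = emb w`. -/
def T (S : SubmanifoldDatum m n F) (w : Fin n → ℂ) : Set (Fin m → ℂ) :=
  Set.range (fderiv ℂ S.emb w)

open Classical in
/-- The coordinate vector mapped by `(D emb)_w` to a tangent vector `v`
(junk value `0` if `v` is not tangent). -/
def lift (S : SubmanifoldDatum m n F) (w : Fin n → ℂ) (v : Fin m → ℂ) : Fin n → ℂ :=
  if h : v ∈ Set.range (fderiv ℂ S.emb w) then h.choose else 0

/-- A tangent field: a holomorphic map `W → ℂ^m` with values in the tangent spaces. -/
def IsTangentField (S : SubmanifoldDatum m n F) (X : (Fin n → ℂ) → (Fin m → ℂ)) : Prop :=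
  DifferentiableOn ℂ X S.W ∧ ∀ w ∈ S.W, X w ∈ S.T w

/-- `D_X Y`: the derivative of `Y` in the coordinate direction mapped by `D emb` to `X`. -/
def covD (S : SubmanifoldDatum m n F) (X Y : (Fin n → ℂ) → (Fin m → ℂ)) :
    (Fin n → ℂ) → (Fin m → ℂ) :=
  fun w => fderiv ℂ Y w (S.lift w (X w))

/-- The induced (Levi-Civita) connection `∇_X Y := pr (D_X Y)`. -/
def nabla (S : SubmanifoldDatum m n F) (X Y : (Fin n → ℂ) → (Fin m → ℂ)) :
    (Fin n → ℂ) → (Fin m → ℂ) :=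
  fun w => S.pr w (S.covD X Y w)

/-- The second fundamental form `h(X,Y) := (D_X Y)^⊥`. -/
def sff (S : SubmanifoldDatum m n F) (X Y : (Fin n → ℂ) → (Fin m → ℂ)) :
    (Fin n → ℂ) → (Fin m → ℂ) :=
  fun w => S.covD X Y w - S.pr w (S.covD X Y w)

/-- The shape operator `A_Ξ X := - pr (D_X Ξ)` of a normal field `Ξ`. -/
def shape (S : SubmanifoldDatum m n F) (Xi X : (Fin n → ℂ) → (Fin m → ℂ)) :
    (Fin n → ℂ) → (Fin m → ℂ) :=
  fun w => - S.pr w (S.covD X Xi w)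

/-- The Lie bracket of tangent fields. -/
def bracket (S : SubmanifoldDatum m n F) (X Y : (Fin n → ℂ) → (Fin m → ℂ)) :
    (Fin n → ℂ) → (Fin m → ℂ) :=
  fun w => S.covD X Y w - S.covD Y X w

/-- `e_N := pr e`, the tangential part of the unit field. -/
def eN (S : SubmanifoldDatum m n F) : (Fin n → ℂ) → (Fin m → ℂ) :=
  fun w => S.pr w F.e

/-- `E_N := pr (E ∘ emb)`, the tangential part of the Euler field. -/
def EN (S : SubmanifoldDatum m n F) : (Fin n → ℂ) → (Fin m → ℂ) :=
  fun w => S.pr w (F.E (S.emb w))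

/-- `E_N^⊥ := E ∘ emb - E_N`, the normal part of the Euler field. -/
def ENperp (S : SubmanifoldDatum m n F) : (Fin n → ℂ) → (Fin m → ℂ) :=
  fun w => F.E (S.emb w) - S.pr w (F.E (S.emb w))

/-- The induced product `X * Y := pr (X ∘ Y)`. -/
def star (S : SubmanifoldDatum m n F) (X Y : (Fin n → ℂ) → (Fin m → ℂ)) :
    (Fin n → ℂ) → (Fin m → ℂ) :=
  fun w => S.pr w (F.mul (S.emb w) (X w) (Y w))

/-- The induced metric is flat: the curvature of `∇` vanishes. -/
def FlatInduced (S : SubmanifoldDatum m n F) : Prop :=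
  ∀ X Y Z, S.IsTangentField X → S.IsTangentField Y → S.IsTangentField Z →
    ∀ w ∈ S.W,
      S.nabla X (S.nabla Y Z) w - S.nabla Y (S.nabla X Z) w
        - S.nabla (S.bracket X Y) Z w = 0

/-- The tangent spaces are closed under the ambient product:
`T_pN ∘_p T_pN ⊆ T_pN`. -/
def ClosedUnderMul (S : SubmanifoldDatum m n F) : Prop :=
  ∀ w ∈ S.W, ∀ x ∈ S.T w, ∀ y ∈ S.T w, F.mul (S.emb w) x y ∈ S.T w

/-- The covariant derivative 4-tensor
`(X', X, Y, Z) ↦ X'⟨X*Y, Z⟩ − ⟨(∇_{X'}X)*Y, Z⟩ − ⟨X*(∇_{X'}Y), Z⟩ − ⟨X*Y, ∇_{X'}Z⟩`. -/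
def ctensor (S : SubmanifoldDatum m n F) (X' X Y Z : (Fin n → ℂ) → (Fin m → ℂ)) :
    (Fin n → ℂ) → ℂ :=
  fun w => fderiv ℂ (fun v => F.g (S.star X Y v) (Z v)) w (S.lift w (X' w))
    - F.g (S.star (S.nabla X' X) Y w) (Z w)
    - F.g (S.star X (S.nabla X' Y) w) (Z w)
    - F.g (S.star X Y w) (S.nabla X' Z w)

/-- `N` is a Frobenius submanifold: the induced data satisfy the Frobenius
manifold axioms. -/
structure IsFrobeniusSub (S : SubmanifoldDatum m n F) : Prop where
  nabla_flat : S.FlatInduced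
  star_comm : ∀ X Y, S.IsTangentField X → S.IsTangentField Y →
    ∀ w ∈ S.W, S.star X Y w = S.star Y X w
  star_assoc : ∀ X Y Z, S.IsTangentField X → S.IsTangentField Y → S.IsTangentField Z →
    ∀ w ∈ S.W, S.star (S.star X Y) Z w = S.star X (S.star Y Z) w
  star_unit : ∀ X, S.IsTangentField X → ∀ w ∈ S.W, S.star X S.eN w = X w
  eN_flat : ∀ X, S.IsTangentField X → ∀ w ∈ S.W, S.nabla X S.eN w = 0
  star_invariant : ∀ X Y Z, S.IsTangentField X → S.IsTangentField Y → S.IsTangentField Z →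
    ∀ w ∈ S.W, F.g (S.star X Y w) (Z w) = F.g (X w) (S.star Y Z w)
  potential_symm : ∀ X' X Y Z, S.IsTangentField X' → S.IsTangentField X →
      S.IsTangentField Y → S.IsTangentField Z → ∀ w ∈ S.W,
    S.ctensor X' X Y Z w = S.ctensor X X' Y Z w ∧
    S.ctensor X' X Y Z w = S.ctensor X' Y X Z w ∧
    S.ctensor X' X Y Z w = S.ctensor X' X Z Y w
  euler_metric : ∃ DN : ℂ, ∀ X Y, S.IsTangentField X → S.IsTangentField Y →
    ∀ w ∈ S.W, F.g (S.nabla X S.EN w) (Y w) + F.g (X w) (S.nabla Y S.EN w)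
      = DN * F.g (X w) (Y w)
  euler_prod : ∀ X Y, S.IsTangentField X → S.IsTangentField Y → ∀ w ∈ S.W,
    S.nabla X (S.star Y S.EN) w - S.star (S.nabla X Y) S.EN w
      + S.star X (S.nabla Y S.EN) w - S.nabla (S.star X Y) S.EN w = S.star X Y w

/-- `N` is a natural Frobenius submanifold: a Frobenius submanifold whose
tangent spaces are closed under the ambient product. -/
def IsNaturalFrobeniusSub (S : SubmanifoldDatum m n F) : Prop :=
  S.IsFrobeniusSub ∧ S.ClosedUnderMul

end SubmanifoldDatum

open Metric Complex intervalIntegral Real MeasureTheory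
set_option maxHeartbeats 1000000
set_option synthInstance.maxHeartbeats 200000

private lemma clm_eq_sum_proj {k l : ℕ} (L : (Fin k → ℂ) →L[ℂ] (Fin l → ℂ)) :
    L = ∑ j : Fin k, (ContinuousLinearMap.proj j : (Fin k → ℂ) →L[ℂ] ℂ).smulRight
      (L fun i => if j = i then (1:ℂ) else 0) := by
  ext ξ : 1
  conv_lhs => rw [pi_eq_sum_univ ξ, map_sum]
  simp only [ContinuousLinearMap.sum_apply]
  apply Finset.sum_congr rfl
  intro j _
  simp

private lemma norm_single_le_one {k : ℕ} (j : Fin k) :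
    ‖(fun i => if j = i then (1:ℂ) else 0 : Fin k → ℂ)‖ ≤ 1 := by
  refine (pi_norm_le_iff_of_nonneg zero_le_one).mpr (fun i => ?_)
  by_cases h : j = i <;> simp [h]

private lemma fderiv_differentiableAt {k l : ℕ} {s : Set (Fin k → ℂ)}
    (hs : IsOpen s) {f : (Fin k → ℂ) → (Fin l → ℂ)}
    (hf : DifferentiableOn ℂ f s) {w : Fin k → ℂ} (hw : w ∈ s) :
    DifferentiableAt ℂ (fderiv ℂ f) w := by
  obtain ⟨r, hr, hball⟩ := Metric.isOpen_iff.mp hs w hw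
  set δ := r / 4 with hδdef
  have hδ : 0 < δ := by positivity
  have hsub : closedBall w (3 * δ) ⊆ s := fun x hx => hball (by
    have hx' : dist x w ≤ 3 * δ := mem_closedBall.mp hx
    have h3 : 3 * δ < r := by rw [hδdef]; linarith
    exact mem_ball.mpr (lt_of_le_of_lt hx' h3))
  obtain ⟨M0, hM0⟩ := (isCompact_closedBall w (3*δ)).exists_bound_of_continuousOn
      (hf.continuousOn.mono hsub)
  set M := max M0 0 with hM
  have hMnn : 0 ≤ M := le_max_right _ _
  have hfM : ∀ x ∈ closedBall w (3*δ), ‖f x‖ ≤ M := fun x hx => (hM0 x hx).trans (le_max_left _ _)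
  -- Cauchy estimate for the derivative on the 2δ-ball
  have hder : ∀ v ∈ closedBall w (2*δ), ‖fderiv ℂ f v‖ ≤ M / δ := by
    intro v hv
    refine ContinuousLinearMap.opNorm_le_bound _ (by positivity) (fun ξ => ?_)
    rcases eq_or_ne ξ 0 with h0 | h0
    · simp [h0]
    have hξ : (0:ℝ) < ‖ξ‖ := norm_pos_iff.mpr h0
    set R := δ / ‖ξ‖ with hR
    have hRpos : 0 < R := by positivity
    have hmaps' : ∀ z : ℂ, z ∈ closedBall (0:ℂ) R → v + z • ξ ∈ closedBall w (3*δ) := by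
      intro z hz
      have hz' : ‖z‖ ≤ R := by simpa [dist_eq_norm] using mem_closedBall.mp hz
      have h1 : ‖z • ξ‖ ≤ δ := by
        rw [norm_smul]
        calc ‖z‖ * ‖ξ‖ ≤ R * ‖ξ‖ := by gcongr
        _ = δ := by rw [hR]; field_simp
      have h2 : dist (v + z • ξ) v = ‖z • ξ‖ := by
        simp [dist_eq_norm]
      calc dist (v + z • ξ) w ≤ dist (v + z • ξ) v + dist v w := dist_triangle _ _ _
        _ ≤ δ + 2 * δ := add_le_add (h2 ▸ h1) (mem_closedBall.mp hv)
        _ = 3 * δ := by ring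
    have hmaps : ∀ z : ℂ, z ∈ closedBall (0:ℂ) R → v + z • ξ ∈ s :=
      fun z hz => hsub (hmaps' z hz)
    have hgd : DifferentiableOn ℂ (fun z : ℂ => f (v + z • ξ)) (closedBall 0 R) := by
      intro z hz
      have h1 : DifferentiableWithinAt ℂ (fun z : ℂ => v + z • ξ) (closedBall 0 R) z :=
        ((differentiableWithinAt_id).smul_const ξ).const_add v
      exact (hf.differentiableAt (hs.mem_nhds (hmaps z hz))).comp_differentiableWithinAt z h1
    have hdc : DiffContOnCl ℂ (fun z : ℂ => f (v + z • ξ)) (ball 0 R) :=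
      DifferentiableOn.diffContOnCl (by rwa [closure_ball (0:ℂ) hRpos.ne'])
    have hd0 : HasDerivAt (fun z : ℂ => f (v + z • ξ)) (fderiv ℂ f v ξ) 0 := by
      have h1 : HasDerivAt (fun z : ℂ => v + z • ξ) ξ 0 := by
        simpa using ((hasDerivAt_id (0:ℂ)).smul_const ξ).const_add v
      have h2 : HasFDerivAt f (fderiv ℂ f v) ((fun z : ℂ => v + z • ξ) 0) := by
        simpa using (hf.differentiableAt (hs.mem_nhds
          (hmaps 0 (mem_closedBall_self hRpos.le)))).hasFDerivAt
      exact h2.comp_hasDerivAt 0 h1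
    have hnorm : ‖fderiv ℂ f v ξ‖ ≤ M / R := by
      rw [← hd0.deriv]
      refine Complex.norm_deriv_le_of_forall_mem_sphere_norm_le hRpos hdc (fun z hz => hfM _ (hmaps' z (sphere_subset_closedBall hz)))
    calc ‖fderiv ℂ f v ξ‖ ≤ M / R := hnorm
      _ = M / δ * ‖ξ‖ := by rw [hR]; field_simp
  -- directional derivative fields are differentiable at w
  have hDj : ∀ j : Fin k, DifferentiableAt ℂ
      (fun v => fderiv ℂ f v (fun i => if j = i then (1:ℂ) else 0)) w := by
    intro j
    set b : Fin k → ℂ := fun i => if j = i then (1:ℂ) else 0 with hb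
    have hbnorm : ‖b‖ ≤ 1 := norm_single_le_one j
    set F : (Fin k → ℂ) → ℝ → (Fin l → ℂ) := fun v θ =>
      deriv (circleMap 0 δ) θ • ((circleMap 0 δ θ) ^ (-2 : ℤ) • f (v + circleMap 0 δ θ • b))
      with hF
    -- membership lemmas
    have hmem2 : ∀ v : Fin k → ℂ, v ∈ ball w δ → ∀ z : ℂ, z ∈ closedBall (0:ℂ) δ →
        v + z • b ∈ closedBall w (2*δ) := by
      intro v hv z hz
      have hz' : ‖z‖ ≤ δ := by simpa [dist_eq_norm] using mem_closedBall.mp hz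
      have h1 : ‖z • b‖ ≤ δ := by
        rw [norm_smul]
        calc ‖z‖ * ‖b‖ ≤ δ * 1 := mul_le_mul hz' hbnorm (norm_nonneg _) hδ.le
          _ = δ := mul_one δ
      have h2 : dist (v + z • b) v = ‖z • b‖ := by simp [dist_eq_norm]
      calc dist (v + z • b) w ≤ dist (v + z • b) v + dist v w := dist_triangle _ _ _
        _ ≤ δ + δ := add_le_add (h2 ▸ h1) (mem_ball.mp hv).le
        _ = 2 * δ := by ring
    have hmemS : ∀ v : Fin k → ℂ, v ∈ ball w δ → ∀ z : ℂ, z ∈ closedBall (0:ℂ) δ →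
        v + z • b ∈ s := fun v hv z hz => hsub (closedBall_subset_closedBall (by linarith) (hmem2 v hv z hz))
    -- representation of the directional derivative as a circle integral
    have hrep : ∀ v ∈ ball w δ, fderiv ℂ f v b
        = (2 * π * I : ℂ)⁻¹ • ∫ θ in (0:ℝ)..2 * π, F v θ := by
      intro v hv
      have hgd : DifferentiableOn ℂ (fun z : ℂ => f (v + z • b)) (closedBall 0 δ) := by
        intro z hz
        have h1 : DifferentiableWithinAt ℂ (fun z : ℂ => v + z • b) (closedBall 0 δ) z :=
          ((differentiableWithinAt_id).smul_const b).const_add v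
        exact (hf.differentiableAt (hs.mem_nhds (hmemS v hv z hz))).comp_differentiableWithinAt z h1
      have hdc : DiffContOnCl ℂ (fun z : ℂ => f (v + z • b)) (ball 0 δ) :=
        DifferentiableOn.diffContOnCl (by rwa [closure_ball (0:ℂ) hδ.ne'])
      have hd0 : HasDerivAt (fun z : ℂ => f (v + z • b)) (fderiv ℂ f v b) 0 := by
        have h1 : HasDerivAt (fun z : ℂ => v + z • b) b 0 := by
          simpa using ((hasDerivAt_id (0:ℂ)).smul_const b).const_add v
        have h2 : HasFDerivAt f (fderiv ℂ f v) ((fun z : ℂ => v + z • b) 0) := by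
          simpa using (hf.differentiableAt (hs.mem_nhds
            (hmemS v hv 0 (mem_closedBall_self hδ.le)))).hasFDerivAt
        exact h2.comp_hasDerivAt 0 h1
      have : deriv (fun z : ℂ => f (v + z • b)) 0 = (2 * π * I : ℂ)⁻¹ •
          ∮ z in C(0, δ), (z - 0) ^ (-2 : ℤ) • f (v + z • b) := by
        rw [eq_inv_smul_iff₀ Complex.two_pi_I_ne_zero, ← hdc.deriv_eq_smul_circleIntegral hδ]
        congr 1
        funext z
        simp [zpow_neg, zpow_ofNat]
      rw [← hd0.deriv]
      rw [this]
      congr 1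
      rw [circleIntegral]
      congr 1
      funext θ
      rw [hF]
      simp
    -- differentiate under the integral sign
    set F' : (Fin k → ℂ) → ℝ → ((Fin k → ℂ) →L[ℂ] (Fin l → ℂ)) := fun x θ =>
      deriv (circleMap 0 δ) θ • (circleMap 0 δ θ) ^ (-2 : ℤ) •
        fderiv ℂ f (x + circleMap 0 δ θ • b) with hF'
    have hcm_mem : ∀ θ : ℝ, circleMap 0 δ θ ∈ closedBall (0:ℂ) δ := by
      intro θ
      rw [mem_closedBall, dist_eq_norm, sub_zero, norm_circleMap_zero,
        abs_of_pos hδ]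
    have hcontθ : ∀ x ∈ ball w δ, Continuous fun θ => F x θ := by
      intro x hx
      have h1 : Continuous (deriv (circleMap 0 δ)) := by
        have : deriv (circleMap 0 δ) = fun θ => circleMap 0 δ θ * I :=
          funext fun θ => deriv_circleMap 0 δ θ
        rw [this]
        exact (continuous_circleMap 0 δ).mul continuous_const
      have h2 : Continuous fun θ => (circleMap 0 δ θ) ^ (-2 : ℤ) :=
        (continuous_circleMap 0 δ).zpow₀ (-2)
          (fun θ => Or.inl (circleMap_ne_center hδ.ne'))
      have h3 : Continuous fun θ => f (x + circleMap 0 δ θ • b) := by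
        refine (hf.continuousOn).comp_continuous
          (continuous_const.add ((continuous_circleMap 0 δ).smul continuous_const)) ?_
        intro θ
        exact hmemS x hx _ (hcm_mem θ)
      exact h1.smul (h2.smul h3)
    have hI : HasFDerivAt (fun v : Fin k → ℂ => ∫ θ in (0:ℝ)..2 * π, F v θ)
        (∫ θ in (0:ℝ)..2 * π, F' w θ) w := by
      have hε : (0:ℝ) < δ / 2 := by positivity
      refine intervalIntegral.hasFDerivAt_integral_of_dominated_of_fderiv_le (μ := MeasureTheory.volume)
        (bound := fun _ => δ * (δ ^ (-2 : ℤ) * (M / δ))) (ball_mem_nhds w hε) ?_ ?_ ?_ ?_ ?_ ?_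
      · filter_upwards [ball_mem_nhds w hδ] with x hx
        exact (hcontθ x hx).aestronglyMeasurable
      · exact Continuous.intervalIntegrable (hcontθ w (mem_ball_self hδ)) 0 (2 * π)
      · have hγ : Continuous fun θ : ℝ => w + circleMap 0 δ θ • b :=
          continuous_const.add ((continuous_circleMap 0 δ).smul continuous_const)
        have hm : StronglyMeasurable fun θ : ℝ => fderiv ℂ f (w + circleMap 0 δ θ • b) :=
          ((measurable_fderiv ℂ f).comp hγ.measurable).stronglyMeasurable
        have h1 : Continuous (deriv (circleMap 0 δ)) := by
          have : deriv (circleMap 0 δ) = fun θ => circleMap 0 δ θ * I :=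
            funext fun θ => deriv_circleMap 0 δ θ
          rw [this]
          exact (continuous_circleMap 0 δ).mul continuous_const
        have h2 : Continuous fun θ => (circleMap 0 δ θ) ^ (-2 : ℤ) :=
          (continuous_circleMap 0 δ).zpow₀ (-2)
            (fun θ => Or.inl (circleMap_ne_center hδ.ne'))
        exact (h1.stronglyMeasurable.smul (h2.stronglyMeasurable.smul hm)).aestronglyMeasurable
      · refine Filter.Eventually.of_forall (fun θ _ => fun x hx => ?_)
        have hx' : x ∈ ball w δ := ball_subset_ball (by linarith) hx
        have hmem : x + circleMap 0 δ θ • b ∈ closedBall w (2 * δ) :=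
          hmem2 x hx' _ (hcm_mem θ)
        have hDb : ‖fderiv ℂ f (x + circleMap 0 δ θ • b)‖ ≤ M / δ := hder _ hmem
        have hFx : F' x θ = deriv (circleMap 0 δ) θ • circleMap 0 δ θ ^ (-2 : ℤ) •
            fderiv ℂ f (x + circleMap 0 δ θ • b) := rfl
        rw [hFx]
        have e1 : ‖deriv (circleMap 0 δ) θ‖ = δ := by
          rw [deriv_circleMap]
          simp [norm_circleMap_zero, abs_of_pos hδ]
        have e2 : ‖(circleMap 0 δ θ) ^ (-2 : ℤ)‖ = δ ^ (-2 : ℤ) := by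
          rw [norm_zpow, norm_circleMap_zero, abs_of_pos hδ]
        have hz : (0:ℝ) ≤ δ ^ (-2 : ℤ) := by positivity
        refine le_trans (norm_smul_le (deriv (circleMap 0 δ) θ)
          (circleMap 0 δ θ ^ (-2 : ℤ) • fderiv ℂ f (x + circleMap 0 δ θ • b))) ?_
        rw [e1]
        refine le_trans (mul_le_mul_of_nonneg_left (norm_smul_le (circleMap 0 δ θ ^ (-2 : ℤ))
          (fderiv ℂ f (x + circleMap 0 δ θ • b))) hδ.le) ?_
        rw [e2]
        exact mul_le_mul_of_nonneg_left
          (mul_le_mul_of_nonneg_left hDb hz) hδ.le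
      · exact intervalIntegrable_const
      · refine Filter.Eventually.of_forall (fun θ _ => fun x hx => ?_)
        have hx' : x ∈ ball w δ := ball_subset_ball (by linarith) hx
        have h1 : HasFDerivAt (fun x : Fin k → ℂ => x + circleMap 0 δ θ • b)
            (ContinuousLinearMap.id ℂ (Fin k → ℂ)) x := (hasFDerivAt_id x).add_const _
        have h2 : HasFDerivAt f (fderiv ℂ f (x + circleMap 0 δ θ • b))
            (x + circleMap 0 δ θ • b) :=
          (hf.differentiableAt (hs.mem_nhds (hmemS x hx' _ (hcm_mem θ)))).hasFDerivAt
        have h3 := h2.comp x h1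
        rw [ContinuousLinearMap.comp_id] at h3
        have h4 := (h3.const_smul ((circleMap 0 δ θ) ^ (-2 : ℤ))).const_smul
          (deriv (circleMap 0 δ) θ)
        exact h4
    have heq : (fun v => fderiv ℂ f v b)
        =ᶠ[nhds w] fun v => (2 * π * I : ℂ)⁻¹ • ∫ θ in (0:ℝ)..2 * π, F v θ :=
      Filter.eventually_of_mem (ball_mem_nhds w hδ) hrep
    exact heq.differentiableAt_iff.mpr (hI.differentiableAt.fun_const_smul _)
  -- assemble
  have hfun : (fderiv ℂ f) = fun v => ∑ j : Fin k,
      (ContinuousLinearMap.smulRightL ℂ (Fin k → ℂ) (Fin l → ℂ)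
        (ContinuousLinearMap.proj j)) (fderiv ℂ f v (fun i => if j = i then (1:ℂ) else 0)) := by
    funext v
    simpa [ContinuousLinearMap.smulRightL] using clm_eq_sum_proj (fderiv ℂ f v)
  rw [hfun]
  exact DifferentiableAt.fun_sum (fun j _ => (differentiableAt_const _).clm_apply (hDj j))


section Lemmas

variable {m n : ℕ} {F : FrobeniusStructure m}


namespace SubmanifoldDatum

lemma lift_spec (S : SubmanifoldDatum m n F) {w : Fin n → ℂ} {x : Fin m → ℂ}
    (hx : x ∈ S.T w) : fderiv ℂ S.emb w (S.lift w x) = x := by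
  have hx' : x ∈ Set.range ⇑(fderiv ℂ S.emb w) := hx
  unfold lift
  rw [dif_pos hx']
  exact hx'.choose_spec

lemma diffAt_of_tangent (S : SubmanifoldDatum m n F) {X : (Fin n → ℂ) → (Fin m → ℂ)}
    (hX : S.IsTangentField X) {w : Fin n → ℂ} (hw : w ∈ S.W) :
    DifferentiableAt ℂ X w :=
  hX.1.differentiableAt (S.W_open.mem_nhds hw)

lemma exists_local_lift (S : SubmanifoldDatum m n F)
    {X : (Fin n → ℂ) → (Fin m → ℂ)} (hX : S.IsTangentField X) {w : Fin n → ℂ}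
    (hw : w ∈ S.W) :
    ∃ u : (Fin n → ℂ) → (Fin n → ℂ), DifferentiableAt ℂ u w ∧
      ∀ᶠ v in nhds w, fderiv ℂ S.emb v (u v) = X v := by
  classical
  have hinj : Function.Injective (fderiv ℂ S.emb w) := S.demb_inj w hw
  obtain ⟨g, hg⟩ := LinearMap.exists_leftInverse_of_injective
    ((fderiv ℂ S.emb w : (Fin n → ℂ) →ₗ[ℂ] (Fin m → ℂ)))
    (by rwa [LinearMap.ker_eq_bot])
  set B : (Fin m → ℂ) →L[ℂ] (Fin n → ℂ) := LinearMap.toContinuousLinearMap g with hB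
  set A : (Fin n → ℂ) → ((Fin n → ℂ) →L[ℂ] (Fin m → ℂ)) := fun v => fderiv ℂ S.emb v with hA
  have hAd : DifferentiableAt ℂ A w := fderiv_differentiableAt S.W_open S.emb_holo hw
  have hBA : B.comp (A w) = ContinuousLinearMap.id ℂ (Fin n → ℂ) := by
    ext c : 1
    have := LinearMap.congr_fun hg c
    simpa [hB, hA, LinearMap.coe_toContinuousLinearMap'] using this
  have hcomp : DifferentiableAt ℂ (fun v => B.comp (A v)) w := by
    have h1 : DifferentiableAt ℂ
        (fun v => (ContinuousLinearMap.compL ℂ (Fin n → ℂ) (Fin m → ℂ) (Fin n → ℂ) B) (A v)) w :=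
      (differentiableAt_const _).clm_apply hAd
    exact h1
  have hu1 : IsUnit (B.comp (A w)) := by
    rw [hBA]
    exact isUnit_one
  have hev : ∀ᶠ v in nhds w, IsUnit (B.comp (A v)) :=
    hcomp.continuousAt.eventually_mem (Units.isOpen.mem_nhds hu1)
  refine ⟨fun v => Ring.inverse (B.comp (A v)) (B (X v)), ?_, ?_⟩
  · refine DifferentiableAt.clm_apply ?_ ?_
    · exact (differentiableAt_inverse hu1).comp w hcomp
    · exact (differentiableAt_const B).clm_apply (S.diffAt_of_tangent hX hw)
  · filter_upwards [hev, S.W_open.mem_nhds hw] with v hunit hvW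
    obtain ⟨c, hc⟩ := hX.2 v hvW
    have h1 : B (X v) = (B.comp (A v)) c := by
      rw [← hc]; rfl
    have h2 : Ring.inverse (B.comp (A v)) ((B.comp (A v)) c) = c := by
      have h3 : Ring.inverse (B.comp (A v)) * (B.comp (A v)) = 1 :=
        Ring.inverse_mul_cancel _ hunit
      calc Ring.inverse (B.comp (A v)) ((B.comp (A v)) c)
          = (Ring.inverse (B.comp (A v)) * (B.comp (A v))) c := rfl
        _ = c := by rw [h3]; rfl
    rw [h1, h2]
    exact hc

lemma bracket_tangent (S : SubmanifoldDatum m n F)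
    {X Y : (Fin n → ℂ) → (Fin m → ℂ)} (hX : S.IsTangentField X) (hY : S.IsTangentField Y)
    {w : Fin n → ℂ} (hw : w ∈ S.W) :
    fderiv ℂ X w (S.lift w (Y w)) - fderiv ℂ Y w (S.lift w (X w)) ∈ S.T w := by
  obtain ⟨u, hu, hAu⟩ := S.exists_local_lift hX hw
  obtain ⟨u', hu', hAu'⟩ := S.exists_local_lift hY hw
  set A : (Fin n → ℂ) → ((Fin n → ℂ) →L[ℂ] (Fin m → ℂ)) := fun v => fderiv ℂ S.emb v with hA
  have hAd : DifferentiableAt ℂ A w := fderiv_differentiableAt S.W_open S.emb_holo hw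
  set lX := S.lift w (X w) with hlX
  set lY := S.lift w (Y w) with hlY
  have hXT : X w ∈ S.T w := hX.2 w hw
  have hYT : Y w ∈ S.T w := hY.2 w hw
  have hinj : Function.Injective (fderiv ℂ S.emb w) := S.demb_inj w hw
  have huw : u w = lX := by
    apply hinj
    rw [S.lift_spec hXT]
    exact hAu.self_of_nhds
  have huw' : u' w = lY := by
    apply hinj
    rw [S.lift_spec hYT]
    exact hAu'.self_of_nhds
  -- derivatives of X and Y via the local lifts
  have hXeq : fderiv ℂ X w = fderiv ℂ (fun v => A v (u v)) w :=
    (Filter.EventuallyEq.fderiv_eq (by filter_upwards [hAu] with v hv using hv.symm) : _)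
  have hYeq : fderiv ℂ Y w = fderiv ℂ (fun v => A v (u' v)) w :=
    (Filter.EventuallyEq.fderiv_eq (by filter_upwards [hAu'] with v hv using hv.symm) : _)
  have hDX : HasFDerivAt (fun v => A v (u v))
      ((A w).comp (fderiv ℂ u w) + (fderiv ℂ A w).flip (u w)) w :=
    hAd.hasFDerivAt.clm_apply hu.hasFDerivAt
  have hDY : HasFDerivAt (fun v => A v (u' v))
      ((A w).comp (fderiv ℂ u' w) + (fderiv ℂ A w).flip (u' w)) w :=
    hAd.hasFDerivAt.clm_apply hu'.hasFDerivAt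
  have hsymm : fderiv ℂ A w lY lX = fderiv ℂ A w lX lY := by
    refine second_derivative_symmetric_of_eventually (f := S.emb) ?_ hAd.hasFDerivAt lY lX
    filter_upwards [S.W_open.mem_nhds hw] with v hv
    exact (S.emb_holo.differentiableAt (S.W_open.mem_nhds hv)).hasFDerivAt
  refine ⟨fderiv ℂ u w lY - fderiv ℂ u' w lX, ?_⟩
  have e1 : fderiv ℂ X w lY = A w (fderiv ℂ u w lY) + fderiv ℂ A w lY (u w) := by
    rw [hXeq, hDX.fderiv]
    rfl
  have e2 : fderiv ℂ Y w lX = A w (fderiv ℂ u' w lX) + fderiv ℂ A w lX (u' w) := by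
    rw [hYeq, hDY.fderiv]
    rfl
  rw [map_sub, e1, e2, huw, huw', hsymm]
  abel

end SubmanifoldDatum

end Lemmas


namespace SubmanifoldDatum

/-! ### Projection lemmas -/

lemma pr_zero_of_orth (S : SubmanifoldDatum m n F) {w : Fin n → ℂ} (hw : w ∈ S.W)
    {z : Fin m → ℂ} (hz : ∀ y ∈ S.T w, F.g z y = 0) : S.pr w z = 0 := by
  refine S.g_nondeg_tangent w hw _ (S.pr_mem w hw z) (fun y hy => ?_)
  have h1 : F.g (z - S.pr w z) y = 0 := S.pr_orth w hw z y hy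
  have h2 : F.g (z - S.pr w z) y = F.g z y - F.g (S.pr w z) y := by
    rw [map_sub]; rfl
  have h3 : F.g z y = 0 := hz y hy
  rw [h2, h3] at h1
  linear_combination -h1

lemma pr_mul_normal (S : SubmanifoldDatum m n F) (hclosed : S.ClosedUnderMul)
    {w : Fin n → ℂ} (hw : w ∈ S.W) {x z : Fin m → ℂ} (hx : x ∈ S.T w)
    (hz : ∀ y ∈ S.T w, F.g z y = 0) :
    S.pr w (F.mul (S.emb w) x z) = 0 := by
  refine S.pr_zero_of_orth hw (fun y hy => ?_)
  rw [F.mul_comm, F.g_invariant]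
  exact hz _ (hclosed w hw x hx y hy)

lemma sff_orth (S : SubmanifoldDatum m n F) {w : Fin n → ℂ} (hw : w ∈ S.W)
    (X Y : (Fin n → ℂ) → (Fin m → ℂ)) :
    ∀ y ∈ S.T w, F.g (S.sff X Y w) y = 0 := fun y hy =>
  S.pr_orth w hw (S.covD X Y w) y hy

end SubmanifoldDatum

/-! ### The derivative of the product field -/

lemma mul_field_diffAt (F : FrobeniusStructure m) {p : Fin m → ℂ} (hp : p ∈ F.U)
    (x y : Fin m → ℂ) : DifferentiableAt ℂ (fun q => F.mul q x y) p :=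
  (F.mul_holo x y).differentiableAt (F.U_open.mem_nhds hp)

/-- The derivative of the multiplication, as a bilinear map. -/
def CderL (F : FrobeniusStructure m) {p : Fin m → ℂ} (hp : p ∈ F.U) (a : Fin m → ℂ) :
    (Fin m → ℂ) →ₗ[ℂ] (Fin m → ℂ) →ₗ[ℂ] (Fin m → ℂ) :=
  LinearMap.mk₂ ℂ (fun x y => fderiv ℂ (fun q => F.mul q x y) p a)
    (fun x x' y => by
      beta_reduce
      have h : (fun q => F.mul q (x + x') y) = fun q => F.mul q x y + F.mul q x' y := by
        funext q; simp
      rw [h, fderiv_fun_add (mul_field_diffAt F hp x y) (mul_field_diffAt F hp x' y)]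
      rfl)
    (fun c x y => by
      beta_reduce
      have h : (fun q => F.mul q (c • x) y) = fun q => c • F.mul q x y := by
        funext q; simp
      rw [h, fderiv_fun_const_smul (mul_field_diffAt F hp x y)]
      rfl)
    (fun x y y' => by
      beta_reduce
      have h : (fun q => F.mul q x (y + y')) = fun q => F.mul q x y + F.mul q x y' := by
        funext q; simp
      rw [h, fderiv_fun_add (mul_field_diffAt F hp x y) (mul_field_diffAt F hp x y')]
      rfl)
    (fun c x y => by
      beta_reduce
      have h : (fun q => F.mul q x (c • y)) = fun q => c • F.mul q x y := by
        funext q; simp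
      rw [h, fderiv_fun_const_smul (mul_field_diffAt F hp x y)]
      rfl)

@[simp] lemma CderL_apply (F : FrobeniusStructure m) {p : Fin m → ℂ} (hp : p ∈ F.U)
    (a x y : Fin m → ℂ) :
    CderL F hp a x y = fderiv ℂ (fun q => F.mul q x y) p a := rfl

lemma g_fderiv_mul (F : FrobeniusStructure m) {p : Fin m → ℂ} (hp : p ∈ F.U)
    (a x y z : Fin m → ℂ) :
    fderiv ℂ (fun q => F.g (F.mul q x y) z) p a
      = F.g (fderiv ℂ (fun q => F.mul q x y) p a) z := by
  set L : (Fin m → ℂ) →L[ℂ] ℂ := LinearMap.toContinuousLinearMap (F.g.flip z) with hL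
  have hLa : ∀ t, L t = F.g t z := fun t => rfl
  have hd : DifferentiableAt ℂ (fun q => F.mul q x y) p := mul_field_diffAt F hp x y
  have h1 : HasFDerivAt (fun q => L (F.mul q x y))
      (L.comp (fderiv ℂ (fun q => F.mul q x y) p)) p :=
    L.hasFDerivAt.comp p hd.hasFDerivAt
  have h2 : (fun q => F.g (F.mul q x y) z) = fun q => L (F.mul q x y) := by
    funext q; rw [hLa]
  rw [h2, h1.fderiv]
  exact hLa _

/-- Symmetry of the derivative of the product in the direction and the first factor,
from potentiality. -/
lemma Cder_symm (F : FrobeniusStructure m) {p : Fin m → ℂ} (hp : p ∈ F.U)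
    (a x y : Fin m → ℂ) :
    fderiv ℂ (fun q => F.mul q x y) p a = fderiv ℂ (fun q => F.mul q a y) p x := by
  have key : ∀ z, F.g (fderiv ℂ (fun q => F.mul q x y) p a
      - fderiv ℂ (fun q => F.mul q a y) p x) z = 0 := by
    intro z
    have h1 := F.potential p hp a x y z
    rw [g_fderiv_mul F hp a x y z, g_fderiv_mul F hp x a y z] at h1
    have h2 : F.g (fderiv ℂ (fun q => F.mul q x y) p a
        - fderiv ℂ (fun q => F.mul q a y) p x) z
        = F.g (fderiv ℂ (fun q => F.mul q x y) p a) z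
          - F.g (fderiv ℂ (fun q => F.mul q a y) p x) z := by
      rw [map_sub]; rfl
    rw [h2, h1]
    ring
  have := F.g_nondeg _ key
  exact sub_eq_zero.mp this

/-- Expansion of a bilinear map along the standard basis. -/
lemma bilin_expand (T : (Fin m → ℂ) →ₗ[ℂ] (Fin m → ℂ) →ₗ[ℂ] (Fin m → ℂ))
    (x y : Fin m → ℂ) :
    T x y = ∑ i : Fin m, ∑ j : Fin m, (x i * y j) •
      T (fun r => if i = r then (1:ℂ) else 0) (fun r => if j = r then (1:ℂ) else 0) := by
  conv_lhs => rw [pi_eq_sum_univ x]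
  rw [map_sum, LinearMap.coe_sum, Finset.sum_apply]
  refine Finset.sum_congr rfl fun i _ => ?_
  rw [_root_.map_smul, LinearMap.smul_apply]
  conv_lhs => rw [pi_eq_sum_univ y, map_sum]
  rw [Finset.smul_sum]
  refine Finset.sum_congr rfl fun j _ => ?_
  rw [_root_.map_smul, smul_smul]


/-- Chain rule for the product field `v ↦ X(v) ∘_{emb v} Y(v)`. -/
lemma fderiv_mul_field (F : FrobeniusStructure m) (S : SubmanifoldDatum m n F)
    {X Y : (Fin n → ℂ) → (Fin m → ℂ)} {w : Fin n → ℂ} (hw : w ∈ S.W)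
    (hX : DifferentiableAt ℂ X w) (hY : DifferentiableAt ℂ Y w) (ξ : Fin n → ℂ) :
    fderiv ℂ (fun v => F.mul (S.emb v) (X v) (Y v)) w ξ
      = fderiv ℂ (fun q => F.mul q (X w) (Y w)) (S.emb w) (fderiv ℂ S.emb w ξ)
        + F.mul (S.emb w) (fderiv ℂ X w ξ) (Y w)
        + F.mul (S.emb w) (X w) (fderiv ℂ Y w ξ) := by
  have hp : S.emb w ∈ F.U := S.emb_maps w hw
  have hembd : HasFDerivAt S.emb (fderiv ℂ S.emb w) w :=
    (S.emb_holo.differentiableAt (S.W_open.mem_nhds hw)).hasFDerivAt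
  set b : Fin m → (Fin m → ℂ) := fun i r => if i = r then (1:ℂ) else 0 with hb
  have hXi : ∀ i : Fin m, HasFDerivAt (fun v => X v i)
      ((ContinuousLinearMap.proj i).comp (fderiv ℂ X w)) w :=
    fun i => ((ContinuousLinearMap.proj i : (Fin m → ℂ) →L[ℂ] ℂ).hasFDerivAt).comp w hX.hasFDerivAt
  have hYj : ∀ j : Fin m, HasFDerivAt (fun v => Y v j)
      ((ContinuousLinearMap.proj j).comp (fderiv ℂ Y w)) w :=
    fun j => ((ContinuousLinearMap.proj j : (Fin m → ℂ) →L[ℂ] ℂ).hasFDerivAt).comp w hY.hasFDerivAt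
  have hmij : ∀ i j : Fin m, HasFDerivAt (fun v => F.mul (S.emb v) (b i) (b j))
      ((fderiv ℂ (fun q => F.mul q (b i) (b j)) (S.emb w)).comp (fderiv ℂ S.emb w)) w :=
    fun i j => ((mul_field_diffAt F hp (b i) (b j)).hasFDerivAt).comp w hembd
  have hterm : ∀ i j : Fin m, HasFDerivAt
      (fun v => (X v i * Y v j) • F.mul (S.emb v) (b i) (b j))
      ((X w i * Y w j) • ((fderiv ℂ (fun q => F.mul q (b i) (b j)) (S.emb w)).comp
          (fderiv ℂ S.emb w))
        + (X w i • ((ContinuousLinearMap.proj j).comp (fderiv ℂ Y w))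
            + Y w j • ((ContinuousLinearMap.proj i).comp (fderiv ℂ X w))).smulRight
          (F.mul (S.emb w) (b i) (b j))) w :=
    fun i j => ((hXi i).mul (hYj j)).smul (hmij i j)
  have hsum : HasFDerivAt
      (fun v => ∑ i : Fin m, ∑ j : Fin m, (X v i * Y v j) • F.mul (S.emb v) (b i) (b j))
      (∑ i : Fin m, ∑ j : Fin m,
        ((X w i * Y w j) • ((fderiv ℂ (fun q => F.mul q (b i) (b j)) (S.emb w)).comp
          (fderiv ℂ S.emb w))
        + (X w i • ((ContinuousLinearMap.proj j).comp (fderiv ℂ Y w))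
            + Y w j • ((ContinuousLinearMap.proj i).comp (fderiv ℂ X w))).smulRight
          (F.mul (S.emb w) (b i) (b j)))) w :=
    HasFDerivAt.fun_sum (fun i _ => HasFDerivAt.fun_sum (fun j _ => hterm i j))
  have hfun : (fun v => F.mul (S.emb v) (X v) (Y v))
      = fun v => ∑ i : Fin m, ∑ j : Fin m, (X v i * Y v j) • F.mul (S.emb v) (b i) (b j) :=
    funext fun v => bilin_expand (F.mul (S.emb v)) (X v) (Y v)
  rw [hfun, hsum.fderiv]
  have e1 := bilin_expand (CderL F hp (fderiv ℂ S.emb w ξ)) (X w) (Y w)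
  simp only [CderL_apply] at e1
  have e2 := bilin_expand (F.mul (S.emb w)) (fderiv ℂ X w ξ) (Y w)
  have e3 := bilin_expand (F.mul (S.emb w)) (X w) (fderiv ℂ Y w ξ)
  rw [e1, e2, e3]
  simp only [ContinuousLinearMap.sum_apply, ContinuousLinearMap.add_apply,
    ContinuousLinearMap.coe_smul', Pi.smul_apply, ContinuousLinearMap.smulRight_apply,
    ContinuousLinearMap.coe_comp', Function.comp_apply, ContinuousLinearMap.proj_apply,
    smul_eq_mul]
  rw [← Finset.sum_add_distrib, ← Finset.sum_add_distrib]
  refine Finset.sum_congr rfl fun i _ => ?_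
  rw [← Finset.sum_add_distrib, ← Finset.sum_add_distrib]
  refine Finset.sum_congr rfl fun j _ => ?_
  module

/-- Identity (1°) in the proof of Theorem A: if the tangent spaces are closed
under the ambient product, the second fundamental form satisfies the
Codazzi-type relation
`U ∘ h(V,W) − V ∘ h(U,W) = h(V, U∘W) − h(U, V∘W)` for all tangent fields. -/
theorem codazzi_type {m n : ℕ} (F : FrobeniusStructure m)
    (S : SubmanifoldDatum m n F)
    (hclosed : S.ClosedUnderMul) :
    ∀ U V W', S.IsTangentField U → S.IsTangentField V → S.IsTangentField W' →
      ∀ w ∈ S.W,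
        F.mul (S.emb w) (U w) (S.sff V W' w) - F.mul (S.emb w) (V w) (S.sff U W' w)
          = S.sff V (fun v => F.mul (S.emb v) (U v) (W' v)) w
            - S.sff U (fun v => F.mul (S.emb v) (V v) (W' v)) w := by
  intro U V W' hU hV hW' w hw
  have hp : S.emb w ∈ F.U := S.emb_maps w hw
  have hUd := S.diffAt_of_tangent hU hw
  have hVd := S.diffAt_of_tangent hV hw
  have hWd := S.diffAt_of_tangent hW' hw
  have hUT : U w ∈ S.T w := hU.2 w hw
  have hVT : V w ∈ S.T w := hV.2 w hw
  have hWT : W' w ∈ S.T w := hW'.2 w hw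
  have hlU : fderiv ℂ S.emb w (S.lift w (U w)) = U w := S.lift_spec hUT
  have hlV : fderiv ℂ S.emb w (S.lift w (V w)) = V w := S.lift_spec hVT
  set p := S.emb w with hpdef
  set lU := S.lift w (U w) with hlUdef
  set lV := S.lift w (V w) with hlVdef
  set P := S.pr w with hPdef
  set dVW := fderiv ℂ W' w lV with hdVWdef
  set dUW := fderiv ℂ W' w lU with hdUWdef
  set DV := fderiv ℂ (fun v => F.mul (S.emb v) (U v) (W' v)) w lV with hDVdef
  set DU := fderiv ℂ (fun v => F.mul (S.emb v) (V v) (W' v)) w lU with hDUdef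
  have hs1 : S.sff V W' w = dVW - P dVW := rfl
  have hs2 : S.sff U W' w = dUW - P dUW := rfl
  have hs3 : S.sff V (fun v => F.mul (S.emb v) (U v) (W' v)) w = DV - P DV := rfl
  have hs4 : S.sff U (fun v => F.mul (S.emb v) (V v) (W' v)) w = DU - P DU := rfl
  rw [hs1, hs2, hs3, hs4]
  -- expansions of the two derivatives of product fields
  have hDV : DV = fderiv ℂ (fun q => F.mul q (U w) (W' w)) p (V w)
      + F.mul p (fderiv ℂ U w lV) (W' w) + F.mul p (U w) dVW := by
    have h := fderiv_mul_field F S hw hUd hWd lV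
    rw [hlV] at h
    exact h
  have hDU : DU = fderiv ℂ (fun q => F.mul q (V w) (W' w)) p (U w)
      + F.mul p (fderiv ℂ V w lU) (W' w) + F.mul p (V w) dUW := by
    have h := fderiv_mul_field F S hw hVd hWd lU
    rw [hlU] at h
    exact h
  have hC : fderiv ℂ (fun q => F.mul q (U w) (W' w)) p (V w)
      = fderiv ℂ (fun q => F.mul q (V w) (W' w)) p (U w) := Cder_symm F hp (V w) (U w) (W' w)
  -- the bracket is tangent
  have hβ : fderiv ℂ U w lV - fderiv ℂ V w lU ∈ S.T w := S.bracket_tangent hU hV hw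
  set β := fderiv ℂ U w lV - fderiv ℂ V w lU with hβdef
  have hβW : F.mul p β (W' w) ∈ S.T w := hclosed w hw β hβ (W' w) hWT
  have hmulβ : F.mul p β (W' w)
      = F.mul p (fderiv ℂ U w lV) (W' w) - F.mul p (fderiv ℂ V w lU) (W' w) := by
    rw [hβdef, map_sub, LinearMap.sub_apply]
  have key1 : DV - DU = F.mul p β (W' w) + F.mul p (U w) dVW - F.mul p (V w) dUW := by
    rw [hDV, hDU, hC, hmulβ]
    abel
  -- projection computations
  have hPβW : P (F.mul p β (W' w)) = F.mul p β (W' w) := S.pr_fix w hw _ hβW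
  have hsplit : ∀ x : Fin m → ℂ, x ∈ S.T w → ∀ d : Fin m → ℂ,
      P (F.mul p x d) = F.mul p x (P d) := by
    intro x hx d
    have h1 : F.mul p x d = F.mul p x (P d) + F.mul p x (d - P d) := by
      rw [← map_add]
      congr 1
      abel
    have h2 : P (F.mul p x (P d)) = F.mul p x (P d) :=
      S.pr_fix w hw _ (hclosed w hw x hx _ (S.pr_mem w hw d))
    have h3 : P (F.mul p x (d - P d)) = 0 :=
      S.pr_mul_normal hclosed hw hx (fun y hy => S.pr_orth w hw d y hy)
    rw [h1, map_add, h2, h3, add_zero]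
  have key2 : P DV - P DU
      = F.mul p β (W' w) + F.mul p (U w) (P dVW) - F.mul p (V w) (P dUW) := by
    have h0 : P (DV - DU) = P DV - P DU := map_sub _ _ _
    rw [← h0, key1, map_sub, map_add, hPβW, hsplit (U w) hUT dVW, hsplit (V w) hVT dUW]
  have hfin1 : F.mul p (U w) (dVW - P dVW)
      = F.mul p (U w) dVW - F.mul p (U w) (P dVW) := map_sub _ _ _
  have hfin2 : F.mul p (V w) (dUW - P dUW)
      = F.mul p (V w) dUW - F.mul p (V w) (P dUW) := map_sub _ _ _
  have hr : (DV - P DV) - (DU - P DU) = (DV - DU) - (P DV - P DU) := by abel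
  rw [hfin1, hfin2, hr, key1, key2]
  abel
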